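/- Let $N \geq 1$ be an integer, $a > 0$, $h \geq 0$ real. Suppose $\theta$ is a real number satisfying $\sum_{j=1}^{N} \frac{\sin(\frac{2\pi j}{N} + \theta)}{[1 + a^2 - 2a\cos(\frac{2\pi j}{N} + \theta) + h^2]^{3/2}} = 0$, excluding the collision case ($a = 1$, $h = 0$, and $\cos(\frac{2\pi j}{N} + \theta) = 1$ for some $j$). Then $\theta \equiv \frac{j\pi}{N} \pmod{2\pi}$ for some integer $j$ with $1 \leq j \leq 2N$. -/

import Mathlib

open Real Polynomial Finset


lemma sum_sin_AP (γ β : ℝ) (n : ℕ) :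
    (2 * Real.sin (β/2)) * ∑ j ∈ Finset.range n, Real.sin (γ + j * β)
    = Real.cos (γ - β/2) - Real.cos (γ + n*β - β/2) := by
  induction n with
  | zero => simp
  | succ n ih =>
    rw [Finset.sum_range_succ, mul_add, ih]
    have key : Real.cos (γ + n*β - β/2) - Real.cos (γ + (n+1)*β - β/2)
        = 2 * Real.sin (β/2) * Real.sin (γ + n*β) := by
      rw [Real.cos_sub_cos]
      rw [show (γ + n*β - β/2 + (γ + (n+1)*β - β/2))/2 = γ + n*β by ring]
      rw [show (γ + n*β - β/2 - (γ + (n+1)*β - β/2))/2 = -(β/2) by ring]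
      rw [Real.sin_neg]; ring
    push_cast
    linarith [key]

lemma sum_sin_multiple (N : ℕ) (hN : 1 ≤ N) (θ : ℝ) (m : ℕ) (hm1 : 1 ≤ m) (hmN : m ≤ N) :
    ∑ j ∈ Finset.Icc 1 N, Real.sin (m * (2 * π * j / N + θ))
    = if m = N then N * Real.sin (N * θ) else 0 := by
  have hN0 : (N:ℝ) ≠ 0 := Nat.cast_ne_zero.mpr (by omega)
  by_cases hm : m = N
  · subst hm
    rw [if_pos rfl]
    have : ∀ j ∈ Finset.Icc 1 m, Real.sin (m * (2 * π * j / m + θ)) = Real.sin (m * θ) := by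
      intro j _
      rw [show (m:ℝ) * (2 * π * j / m + θ) = m*θ + j*(2*π) by field_simp; ring]
      exact Real.sin_add_nat_mul_two_pi _ j
    rw [Finset.sum_congr rfl this, Finset.sum_const, Nat.card_Icc]
    simp
  · rw [if_neg hm]
    have hmN' : m < N := lt_of_le_of_ne hmN hm
    set β := 2 * π * m / N with hβ
    set γ := m * θ + β with hγ
    have hterm : ∀ j ∈ Finset.range N, Real.sin ((m:ℝ) * (2 * π * (j+1 : ℕ) / N + θ)) = Real.sin (γ + j * β) := by
      intro j _
      congr 1
      push_cast
      rw [hγ, hβ]; field_simp; ring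
    have hterm' : ∑ j ∈ Finset.range N, Real.sin (γ + j * β)
        = ∑ j ∈ Finset.range N, Real.sin ((m:ℝ) * (2 * π * ((j:ℕ)+1 : ℕ) / N + θ)) :=
      (Finset.sum_congr rfl hterm).symm
    have hre : ∑ j ∈ Finset.Icc 1 N, Real.sin ((m:ℝ) * (2 * π * j / N + θ))
        = ∑ j ∈ Finset.range N, Real.sin (γ + j * β) := by
      rw [hterm']
      apply Finset.sum_nbij' (fun j => j - 1) (fun j => j + 1)
      · intro j hj; simp at hj ⊢; omega
      · intro j hj; simp at hj ⊢; omega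
      · intro j hj; simp at hj ⊢; omega
      · intro j hj; simp
      · intro j hj
        simp only [Finset.mem_Icc] at hj
        rw [show j - 1 + 1 = j by omega]
    rw [hre]
    have hsin : Real.sin (β/2) ≠ 0 := by
      rw [hβ]
      have h1 : 0 < π * m / N := by positivity
      have h2 : π * m / N < π := by
        rw [div_lt_iff₀ (by positivity)]
        have : (m:ℝ) < N := by exact_mod_cast hmN'
        nlinarith [Real.pi_pos]
      have := Real.sin_pos_of_pos_of_lt_pi h1 h2
      rw [show 2 * π * m / N / 2 = π * m / N by ring]
      linarith
    have htel := sum_sin_AP γ β N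
    have hend : Real.cos (γ + N*β - β/2) = Real.cos (γ - β/2) := by
      rw [show γ + N*β - β/2 = γ - β/2 + m*(2*π) by rw [hβ]; field_simp; ring]
      exact Real.cos_add_nat_mul_two_pi _ m
    rw [hend, sub_self] at htel
    have h2 : (2 : ℝ) * Real.sin (β/2) ≠ 0 := by
      simp [hsin]
    exact (mul_eq_zero.mp htel).resolve_left h2


noncomputable def Sc : ℕ → Polynomial ℝ
  | 0 => 1
  | 1 => Polynomial.C 2 * Polynomial.X
  | (n+2) => Polynomial.C 2 * Polynomial.X * Sc (n+1) - Sc n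

lemma Sc_sin : ∀ (n : ℕ) (y : ℝ), (Sc n).eval (Real.cos y) * Real.sin y = Real.sin ((n+1) * y) := by
  intro n
  induction n using Nat.strong_induction_on with
  | _ n ih =>
    match n with
    | 0 => intro y; simp [Sc]
    | 1 =>
      intro y
      simp only [Sc, Polynomial.eval_mul, Polynomial.eval_C, Polynomial.eval_X]
      rw [show ((1:ℕ)+1 : ℝ) * y = 2 * y by push_cast; ring, Real.sin_two_mul]
      ring
    | (n+2) =>
      intro y
      simp only [Sc, Polynomial.eval_sub, Polynomial.eval_mul, Polynomial.eval_C, Polynomial.eval_X]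
      have h1 := ih (n+1) (by omega) y
      have h2 := ih n (by omega) y
      have key : Real.sin (((n:ℝ)+1+1)*y + y)
          = 2 * Real.sin (((n:ℝ)+1+1)*y) * Real.cos y - Real.sin (((n:ℝ)+1+1)*y - y) := by
        rw [Real.sin_add, Real.sin_sub]; ring
      push_cast at h1 h2 ⊢
      rw [show ((n:ℝ)+2+1)*y = ((n:ℝ)+1+1)*y + y by ring, key,
        show ((n:ℝ)+1+1)*y - y = ((n:ℝ)+1)*y by ring, ← h1, ← h2]
      ring

lemma Sc_natDegree : ∀ n : ℕ, (Sc n).natDegree ≤ n := by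
  intro n
  induction n using Nat.strong_induction_on with
  | _ n ih =>
    match n with
    | 0 => simp [Sc]
    | 1 =>
      simp only [Sc]
      refine (Polynomial.natDegree_mul_le).trans ?_
      simp
    | (n+2) =>
      simp only [Sc]
      refine (Polynomial.natDegree_sub_le _ _).trans ?_
      refine max_le ?_ ?_
      · have hCX : (Polynomial.C (2:ℝ) * Polynomial.X).natDegree ≤ 1 := by
          refine Polynomial.natDegree_mul_le.trans ?_; simp
        have h2 := ih (n+1) (by omega)
        refine (Polynomial.natDegree_mul_le).trans ?_
        omega
      · exact (ih n (by omega)).trans (by omega)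

lemma Sc_coeff : ∀ n : ℕ, (Sc n).coeff n = 2^n := by
  intro n
  induction n using Nat.strong_induction_on with
  | _ n ih =>
    match n with
    | 0 => simp [Sc]
    | 1 => simp [Sc, Polynomial.coeff_C_mul, Polynomial.coeff_X_one]
    | (n+2) =>
      simp only [Sc, Polynomial.coeff_sub, Polynomial.coeff_C_mul]
      have h1 : (Polynomial.X * Sc (n+1)).coeff (n+2) = (Sc (n+1)).coeff (n+1) := by
        rw [Polynomial.coeff_X_mul]
      have h2 : (Sc n).coeff (n+2) = 0 :=
        Polynomial.coeff_eq_zero_of_natDegree_lt (lt_of_le_of_lt (Sc_natDegree n) (by omega))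
      rw [mul_assoc, Polynomial.coeff_C_mul, h1, h2, ih (n+1) (by omega)]
      ring




lemma key_expansion (N : ℕ) (hN : 1 ≤ N) (θ : ℝ) :
    ∀ d, d < N → ∀ P : Polynomial ℝ, P.natDegree ≤ d →
    ∑ j ∈ Finset.Icc 1 N, Real.sin (2 * π * j / N + θ) * P.eval (Real.cos (2 * π * j / N + θ))
      = P.coeff (N-1) / 2^(N-1) * (N * Real.sin (N * θ)) := by
  intro d
  induction d with
  | zero =>
    intro _ P hP
    rw [Polynomial.eq_C_of_natDegree_le_zero hP]
    simp only [Polynomial.eval_C, Polynomial.coeff_C]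
    have h1 := sum_sin_multiple N hN θ 1 le_rfl hN
    simp only [Nat.cast_one, one_mul] at h1
    rw [← Finset.sum_mul, h1]
    by_cases h : N = 1
    · subst h; simp [mul_comm]
    · rw [if_neg (by omega), if_neg (by omega)]
      simp
  | succ d ih =>
    intro hdN P hP
    set c := P.coeff (d+1) with hc
    set Q := P - Polynomial.C (c / 2^(d+1)) * Sc (d+1) with hQ
    have hQdeg : Q.natDegree ≤ d := by
      refine Polynomial.natDegree_le_iff_coeff_eq_zero.mpr fun m hm => ?_
      rw [hQ, Polynomial.coeff_sub, Polynomial.coeff_C_mul]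
      rcases eq_or_lt_of_le (Nat.succ_le_of_lt hm) with h | h
      · rw [← h, ← hc, Sc_coeff]
        field_simp
        ring
      · rw [Polynomial.coeff_eq_zero_of_natDegree_lt (lt_of_le_of_lt hP h),
          Polynomial.coeff_eq_zero_of_natDegree_lt (lt_of_le_of_lt (Sc_natDegree (d+1)) h)]
        ring
    have hPQ : P = Q + Polynomial.C (c / 2^(d+1)) * Sc (d+1) := by rw [hQ]; ring
    have hsplit : ∑ j ∈ Finset.Icc 1 N, Real.sin (2 * π * j / N + θ) * P.eval (Real.cos (2 * π * j / N + θ))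
        = (∑ j ∈ Finset.Icc 1 N, Real.sin (2 * π * j / N + θ) * Q.eval (Real.cos (2 * π * j / N + θ)))
          + (c / 2^(d+1)) * ∑ j ∈ Finset.Icc 1 N, Real.sin ((d+1+1 : ℕ) * (2 * π * j / N + θ)) := by
      rw [Finset.mul_sum, ← Finset.sum_add_distrib]
      refine Finset.sum_congr rfl fun j hj => ?_
      rw [hPQ]
      simp only [Polynomial.eval_add, Polynomial.eval_mul, Polynomial.eval_C]
      have := Sc_sin (d+1) (2 * π * j / N + θ)
      push_cast at this ⊢
      linear_combination (c / 2^(d+1)) * this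
    rw [hsplit, ih (by omega) Q hQdeg,
      sum_sin_multiple N hN θ (d+1+1) (by omega) (by omega)]
    have hcoeff : P.coeff (N-1) = Q.coeff (N-1) + (c / 2^(d+1)) * (Sc (d+1)).coeff (N-1) := by
      rw [hPQ]; simp [Polynomial.coeff_add, Polynomial.coeff_C_mul]
    by_cases hdn : d + 1 + 1 = N
    · have hd1 : d + 1 = N - 1 := by omega
      rw [if_pos hdn, hcoeff, hd1, Sc_coeff]
      have h2 : (2:ℝ)^(N-1) ≠ 0 := by positivity
      field_simp
    · rw [if_neg hdn, hcoeff,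
        Polynomial.coeff_eq_zero_of_natDegree_lt (lt_of_le_of_lt (Sc_natDegree (d+1)) (by omega))]
      ring_nf


lemma multiRolle (M : ℝ) : ∀ (n : ℕ) (F : ℕ → ℝ → ℝ),
    (∀ k x, x < M → HasDerivAt (F k) (F (k+1) x) x) →
    ∀ (z : Fin (n+1) → ℝ), StrictMono z → (∀ i, z i < M) →
    (∀ i, F 0 (z i) = 0) → ∃ ξ, ξ < M ∧ F n ξ = 0 := by
  intro n
  induction n with
  | zero => exact fun F hF z _ hzM hz0 => ⟨z 0, hzM 0, hz0 0⟩
  | succ n ih =>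
    intro F hF z hz hzM hz0
    have hw : ∀ i : Fin (n+1), ∃ w, w ∈ Set.Ioo (z i.castSucc) (z i.succ) ∧ F 1 w = 0 := by
      intro i
      have hab : z i.castSucc < z i.succ := hz (Fin.castSucc_lt_succ (i := i))
      have hcont : ContinuousOn (F 0) (Set.Icc (z i.castSucc) (z i.succ)) := by
        intro x hx
        have hxM : x < M := lt_of_le_of_lt hx.2 (hzM i.succ)
        exact ((hF 0 x hxM).continuousAt).continuousWithinAt
      obtain ⟨w, hw1, hw2⟩ := exists_hasDerivAt_eq_zero hab hcont (by rw [hz0, hz0])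
        (fun x hx => hF 0 x (lt_trans hx.2 (hzM i.succ)))
      exact ⟨w, hw1, hw2⟩
    choose w hw1 hw2 using hw
    have hwM : ∀ i, w i < M := fun i => lt_trans (hw1 i).2 (hzM i.succ)
    have hwmono : StrictMono w := by
      intro i j hij
      calc w i < z i.succ := (hw1 i).2
        _ ≤ z j.castSucc := by
          rcases eq_or_lt_of_le (show i.succ ≤ j.castSucc by
            rw [Fin.le_def, Fin.val_succ, Fin.coe_castSucc]
            exact Fin.lt_def.mp hij) with h | h
          · rw [h]
          · exact le_of_lt (hz h)
        _ < w j := (hw1 j).1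
    exact ih (fun k => F (k+1)) (fun k x hx => hF (k+1) x hx) w hwmono hwM hw2

noncomputable def Kc (a : ℝ) : ℕ → ℝ
  | 0 => 1
  | (k+1) => Kc a k * (a * (2*k+3))

lemma Kc_pos {a : ℝ} (ha : 0 < a) : ∀ k, 0 < Kc a k
  | 0 => one_pos
  | (k+1) => mul_pos (Kc_pos ha k) (by positivity)

lemma phi_deriv {a : ℝ} (c : ℝ) (ha : 0 < a) (k : ℕ) (x : ℝ) (hx : x < c / (2*a)) :
    HasDerivAt (fun u => Kc a k * (c - 2*a*u) ^ (-(3:ℝ)/2 - k))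
      (Kc a (k+1) * (c - 2*a*x) ^ (-(3:ℝ)/2 - (k+1 : ℕ))) x := by
  have hpos : 0 < c - 2*a*x := by
    have : 2*a*x < c := by
      have h2a : 0 < 2*a := by positivity
      calc 2*a*x < 2*a*(c/(2*a)) := by exact mul_lt_mul_of_pos_left hx h2a
        _ = c := by field_simp
    linarith
  have h1 : HasDerivAt (fun u : ℝ => c - 2*a*u) (-(2*a)) x := by
    simpa using ((hasDerivAt_id x).const_mul (2*a)).const_sub c
  have h2 : HasDerivAt (fun y : ℝ => y ^ (-(3:ℝ)/2 - k))
      ((-(3:ℝ)/2 - k) * (c - 2*a*x) ^ (-(3:ℝ)/2 - k - 1)) (c - 2*a*x) :=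
    Real.hasDerivAt_rpow_const (Or.inl (ne_of_gt hpos))
  have h3 := (h2.comp x h1).const_mul (Kc a k)
  refine h3.congr_deriv ?_
  rw [show Kc a (k+1) = Kc a k * (a * (2*k+3)) from rfl]
  rw [show (-(3:ℝ)/2 - ((k+1 : ℕ) : ℝ)) = -(3:ℝ)/2 - k - 1 by push_cast; ring]
  ring

lemma Kc_zero (a : ℝ) : Kc a 0 = 1 := rfl

theorem stmt19 (N : ℕ) (hN : 1 ≤ N) (a h θ : ℝ) (ha : 0 < a) (hh : 0 ≤ h)
    (hsum : ∑ j ∈ Finset.Icc 1 N,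
        Real.sin (2 * π * j / N + θ) /
          (1 + a ^ 2 - 2 * a * Real.cos (2 * π * j / N + θ) + h ^ 2) ^ ((3:ℝ)/2) = 0)
    (hcol : ¬ (a = 1 ∧ h = 0 ∧ ∃ j ∈ Finset.Icc 1 N, Real.cos (2 * π * j / N + θ) = 1)) :
    ∃ j : ℕ, 1 ≤ j ∧ j ≤ 2 * N ∧ ∃ m : ℤ, θ = j * π / N + m * (2 * π) := by
  have hNR : (N:ℝ) ≠ 0 := Nat.cast_ne_zero.mpr (by omega)
  -- Reduce to showing θ is an integer multiple of π / N
  suffices hkey : ∃ k : ℤ, θ = k * π / N by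
    obtain ⟨k, hk⟩ := hkey
    have h2N : (0:ℤ) < 2*N := by exact_mod_cast (by omega : 0 < 2*N)
    set r := k % (2*N) with hr
    set m := k / (2*N) with hm
    have hdiv : 2*(N:ℤ) * m + r = k := Int.mul_ediv_add_emod k (2*N)
    have hr0 : 0 ≤ r := Int.emod_nonneg k (by omega)
    have hrlt : r < 2*N := Int.emod_lt_of_pos k h2N
    by_cases hrz : r = 0
    · refine ⟨2*N, by omega, le_rfl, m - 1, ?_⟩
      have hkk : (k:ℝ) = 2*N*m := by
        rw [hrz, add_zero] at hdiv
        exact_mod_cast hdiv.symm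
      rw [hk, hkk]
      push_cast
      field_simp
      ring
    · have hr1 : 1 ≤ r.toNat := by omega
      have hr2 : r.toNat ≤ 2*N := by omega
      refine ⟨r.toNat, hr1, hr2, m, ?_⟩
      have hkk : (k:ℝ) = 2*N*m + r := by exact_mod_cast hdiv.symm
      have hrt : ((r.toNat : ℕ) : ℝ) = (r:ℝ) := by
        exact_mod_cast congrArg (Int.cast : ℤ → ℝ) (Int.toNat_of_nonneg hr0)
      rw [hk, hkk, hrt]
      field_simp
      ring
  -- setup
  set cc := 1 + a^2 + h^2 with hcc
  have h2a : (0:ℝ) < 2*a := by positivity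
  have hM : ∀ j ∈ Finset.Icc 1 N, Real.cos (2*π*j/N + θ) < cc/(2*a) := by
    intro j hj
    rw [lt_div_iff₀ h2a]
    rcases lt_or_eq_of_le (Real.cos_le_one (2*π*j/N + θ)) with hlt | heq
    · nlinarith [sq_nonneg (1-a), sq_nonneg h]
    · have hnot : ¬(a = 1 ∧ h = 0) := fun ⟨ha1, hh0⟩ => hcol ⟨ha1, hh0, j, hj, heq⟩
      have hpos : 0 < (1-a)^2 + h^2 := by
        rcases not_and_or.mp hnot with h1 | h1
        · have h1' : (1-a) ≠ 0 := fun hz => h1 (by linarith)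
          nlinarith [mul_self_pos.mpr h1', sq_nonneg h]
        · nlinarith [mul_self_pos.mpr h1, sq_nonneg (1-a)]
      rw [heq]
      nlinarith [hpos]
  by_cases hinj : Set.InjOn (fun j : ℕ => Real.cos (2*π*j/N + θ)) (Finset.Icc 1 N)
  · -- nodes distinct: interpolation argument
    obtain ⟨n, rfl⟩ : ∃ n, N = n + 1 := ⟨N - 1, by omega⟩
    set v : ℕ → ℝ := fun j => Real.cos (2*π*j/(n+1:ℕ) + θ) with hv
    set rr : ℕ → ℝ := fun j => (cc - 2*a*(v j)) ^ (-(3:ℝ)/2 - ((0:ℕ):ℝ)) with hrr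
    set P := Lagrange.interpolate (Finset.Icc 1 (n+1)) v rr with hP
    have hcard : (Finset.Icc 1 (n+1)).card = n+1 := by simp [Nat.card_Icc]
    have hPdeg : P.natDegree ≤ n := by
      rcases eq_or_ne P 0 with h0 | h0
      · rw [h0]; simp
      · have hd := Lagrange.degree_interpolate_lt rr hinj
        rw [hcard, ← hP] at hd
        have := (Polynomial.natDegree_lt_iff_degree_lt h0).mpr hd
        omega
    have hPeval : ∀ j ∈ Finset.Icc 1 (n+1), P.eval (v j) = rr j :=
      fun j hj => Lagrange.eval_interpolate_at_node rr hinj hj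
    set M : ℝ := cc/(2*a) with hMdef
    set F : ℕ → ℝ → ℝ :=
      fun k u => Kc a k * (cc - 2*a*u) ^ (-(3:ℝ)/2 - (k:ℝ)) - (Polynomial.derivative^[k] P).eval u
      with hF
    have hFderiv : ∀ k x, x < M → HasDerivAt (F k) (F (k+1) x) x := by
      intro k x hx
      have h1 := phi_deriv cc ha k x hx
      have h2 : HasDerivAt (fun u => (Polynomial.derivative^[k] P).eval u)
          ((Polynomial.derivative^[k+1] P).eval x) x := by
        rw [Function.iterate_succ_apply']
        exact Polynomial.hasDerivAt _ x
      have h3 := h1.sub h2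
      exact h3
    -- zeros of F 0
    have hcard' : ((Finset.Icc 1 (n+1)).image v).card = n+1 := by
      rw [Finset.card_image_of_injOn hinj, hcard]
    set z : Fin (n+1) → ℝ := fun i => ((Finset.Icc 1 (n+1)).image v).orderEmbOfFin hcard' i with hz
    have hzmono : StrictMono z := (((Finset.Icc 1 (n+1)).image v).orderEmbOfFin hcard').strictMono
    have hzmem : ∀ i, ∃ j ∈ Finset.Icc 1 (n+1), v j = z i := by
      intro i
      have hmem := Finset.orderEmbOfFin_mem ((Finset.Icc 1 (n+1)).image v) hcard' i
      obtain ⟨j, hj, hje⟩ := Finset.mem_image.mp hmem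
      exact ⟨j, hj, hje⟩
    have hzM : ∀ i, z i < M := by
      intro i
      obtain ⟨j, hj, hje⟩ := hzmem i
      rw [← hje]
      exact hM j hj
    have hz0 : ∀ i, F 0 (z i) = 0 := by
      intro i
      obtain ⟨j, hj, hje⟩ := hzmem i
      rw [← hje, hF]
      simp only [Function.iterate_zero_apply, Kc_zero, one_mul, Nat.cast_zero]
      rw [hPeval j hj, hrr]
      simp
    obtain ⟨ξ, hξM, hξ0⟩ := multiRolle M n F hFderiv z hzmono hzM hz0
    -- P.coeff n is positive
    have hconst : Polynomial.derivative^[n] P = Polynomial.C ((Polynomial.derivative^[n] P).coeff 0) := by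
      apply Polynomial.eq_C_of_natDegree_le_zero
      have := Polynomial.natDegree_iterate_derivative P n
      omega
    have hc0 : ((Polynomial.derivative^[n] P).coeff 0) = (n.factorial : ℝ) * P.coeff n := by
      rw [Polynomial.coeff_iterate_derivative]
      simp only [zero_add, Nat.descFactorial_self, nsmul_eq_mul]
    have hξpos : 0 < cc - 2*a*ξ := by
      have : 2*a*ξ < cc := by
        calc 2*a*ξ < 2*a*M := by exact mul_lt_mul_of_pos_left hξM h2a
          _ = cc := by rw [hMdef]; field_simp
      linarith
    have hcoeffpos : 0 < P.coeff n := by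
      have hξ0' : Kc a n * (cc - 2*a*ξ) ^ (-(3:ℝ)/2 - (n:ℝ))
          - (Polynomial.derivative^[n] P).eval ξ = 0 := hξ0
      have heval : (Polynomial.derivative^[n] P).eval ξ = (n.factorial : ℝ) * P.coeff n := by
        conv_lhs => rw [hconst]
        rw [Polynomial.eval_C, hc0]
      rw [heval] at hξ0'
      have hlhs : 0 < Kc a n * (cc - 2*a*ξ) ^ (-(3:ℝ)/2 - (n:ℝ)) :=
        mul_pos (Kc_pos ha n) (Real.rpow_pos_of_pos hξpos _)
      have hfac : (0:ℝ) < n.factorial := by exact_mod_cast n.factorial_pos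
      have h3 : 0 < (n.factorial : ℝ) * P.coeff n := by linarith
      rcases mul_pos_iff.mp h3 with ⟨_, hc⟩ | ⟨hneg, _⟩
      · exact hc
      · linarith
    -- rewrite the hypothesis sum
    have hsum' : ∑ j ∈ Finset.Icc 1 (n+1),
        Real.sin (2*π*j/(n+1:ℕ) + θ) * P.eval (Real.cos (2*π*j/(n+1:ℕ) + θ)) = 0 := by
      rw [← hsum]
      refine Finset.sum_congr rfl fun j hj => ?_
      have hvj : P.eval (Real.cos (2*π*j/(n+1:ℕ) + θ)) = (cc - 2*a*(v j)) ^ (-(3:ℝ)/2 - ((0:ℕ):ℝ)) := by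
        rw [show Real.cos (2*π*j/(n+1:ℕ) + θ) = v j from rfl, hPeval j hj, hrr]
      rw [hvj]
      have hd : (1 + a ^ 2 - 2 * a * Real.cos (2 * π * j / (n+1:ℕ) + θ) + h ^ 2) = cc - 2*a*(v j) := by
        rw [hcc, hv]; ring
      have hdpos : 0 < cc - 2*a*(v j) := by
        have := hM j hj
        rw [lt_div_iff₀ h2a] at this
        rw [hcc, hv]
        nlinarith [this]
      rw [hd, show (-(3:ℝ)/2 - ((0:ℕ):ℝ)) = -((3:ℝ)/2) by push_cast; ring,
        Real.rpow_neg (le_of_lt hdpos)]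
      ring
    rw [key_expansion (n+1) (by omega) θ n (by omega) P hPdeg] at hsum'
    simp only [Nat.add_sub_cancel] at hsum'
    have h2n : (0:ℝ) < 2^n := by positivity
    have hNpos : (0:ℝ) < ((n+1:ℕ):ℝ) := by positivity
    have hsin0 : Real.sin (((n+1:ℕ):ℝ) * θ) = 0 := by
      rcases mul_eq_zero.mp hsum' with h1 | h1
      · exfalso
        rcases div_eq_zero_iff.mp h1 with h2 | h2
        · exact (ne_of_gt hcoeffpos) h2
        · exact (ne_of_gt h2n) h2
      · rcases mul_eq_zero.mp h1 with h2 | h2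
        · exact absurd h2 (ne_of_gt hNpos)
        · exact h2
    obtain ⟨k, hk⟩ := Real.sin_eq_zero_iff.mp hsin0
    refine ⟨k, ?_⟩
    have hne0 : ((n+1:ℕ):ℝ) ≠ 0 := ne_of_gt hNpos
    have hk' := hk
    push_cast at hk' ⊢
    field_simp
    linarith [hk']
  · -- degenerate case: two equal cosines force θ to be a multiple of π/N
    rw [Set.InjOn] at hinj
    push_neg at hinj
    obtain ⟨i, hi, j, hj, heq0, hne⟩ := hinj
    rw [Finset.mem_coe, Finset.mem_Icc] at hi hj
    have heq : Real.cos (2*π*(i:ℝ)/N + θ) = Real.cos (2*π*(j:ℝ)/N + θ) := heq0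
    have hi1 : 1 ≤ i ∧ i ≤ N := hi
    have hj1 : 1 ≤ j ∧ j ≤ N := hj
    have hpi : (π:ℝ) ≠ 0 := ne_of_gt Real.pi_pos
    rcases Real.cos_eq_cos_iff.mp heq with ⟨k, hk | hk⟩
    · exfalso
      have h4 : (2*π*(j:ℝ)/N + θ) = 2*(k:ℝ)*π + (2*π*(i:ℝ)/N + θ) := hk
      have h3 : 2*π*(j:ℝ) = 2*π*((k:ℝ)*N + i) := by
        have h6 : 2*π*(j:ℝ) + θ*N = (2*(k:ℝ)*π)*N + (2*π*(i:ℝ) + θ*N) := by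
          have h5 := congrArg (fun t : ℝ => t * (N:ℝ)) h4
          field_simp at h5
          linarith
        linear_combination h6
      have h7 : (j:ℝ) = (k:ℝ)*N + i := by
        have h2pi : (2*π : ℝ) ≠ 0 := by positivity
        exact mul_left_cancel₀ h2pi h3
      have hint : (j:ℤ) = k*N + i := by exact_mod_cast h7
      have hNZ : (1:ℤ) ≤ (N:ℤ) := by exact_mod_cast hN
      have hiZ : 1 ≤ (i:ℤ) ∧ (i:ℤ) ≤ (N:ℤ) := by exact_mod_cast hi1
      have hjZ : 1 ≤ (j:ℤ) ∧ (j:ℤ) ≤ (N:ℤ) := by exact_mod_cast hj1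
      have hkN : k*(N:ℤ) = (j:ℤ) - (i:ℤ) := by linarith [hint]
      rcases lt_trichotomy k 0 with hk0 | hk0 | hk0
      · have hk1 : k ≤ -1 := by omega
        have : k*(N:ℤ) ≤ (-1)*(N:ℤ) := mul_le_mul_of_nonneg_right hk1 (by omega)
        omega
      · subst hk0
        simp at hint
        exact hne (by exact_mod_cast hint.symm)
      · have hk1 : (1:ℤ) ≤ k := hk0
        have : (1:ℤ)*(N:ℤ) ≤ k*(N:ℤ) := mul_le_mul_of_nonneg_right hk1 (by omega)
        omega
    · refine ⟨k*N - i - j, ?_⟩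
      have h4 : (2*π*(j:ℝ)/N + θ) = 2*(k:ℝ)*π - (2*π*(i:ℝ)/N + θ) := hk
      push_cast
      rw [eq_div_iff hNR]
      have h6 : 2*π*(j:ℝ) + θ*N = 2*(k:ℝ)*π*N - (2*π*(i:ℝ) + θ*N) := by
        have h5 := congrArg (fun t : ℝ => t * (N:ℝ)) h4
        field_simp at h5
        linarith
      linear_combination (1/2) * h6
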